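/- Let a, b be nonnegative integers with a > 2b. For each integer i ≥ 2, let b_i := b(KG(2i + a, i + b)) denote the b-chromatic number of KG(2i + a, i + b). Then b_2 ≤ b_3 ≤ b_4 ≤ ... ; that is, for every integer i ≥ 2, b(KG(2i + a, i + b)) ≤ b(KG(2(i+1) + a, (i+1) + b)). -/

import Mathlib

/-- A proper coloring of `G` with colors in `Fin k`. -/
def IsProperColoring {V : Type*} (G : SimpleGraph V) {k : ℕ} (f : V → Fin k) : Prop :=
  ∀ u v : V, G.Adj u v → f u ≠ f v

/-- A vertex `v` is b-dominating w.r.t. the coloring `f` if every color appears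
on the closed neighborhood of `v`. -/
def IsBDominating {V : Type*} (G : SimpleGraph V) {k : ℕ} (f : V → Fin k) (v : V) : Prop :=
  ∀ i : Fin k, f v = i ∨ ∃ u : V, G.Adj v u ∧ f u = i

/-- A colorful (b-) coloring: a proper coloring in which every color class contains
a b-dominating vertex. -/
def IsColorfulColoring {V : Type*} (G : SimpleGraph V) {k : ℕ} (f : V → Fin k) : Prop :=
  IsProperColoring G f ∧ ∀ i : Fin k, ∃ v : V, f v = i ∧ IsBDominating G f v

/-- `BSet G` is the set of positive integers `k` such that `G` has a colorful `k`-coloring. -/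
def BSet {V : Type*} (G : SimpleGraph V) : Set ℕ :=
  {k | 0 < k ∧ ∃ f : V → Fin k, IsColorfulColoring G f}

/-- The b-chromatic number: the maximum of `BSet G`. -/
noncomputable def bChromaticNumber {V : Type*} (G : SimpleGraph V) : ℕ :=
  sSup (BSet G)

/-- A semi-locally-surjective graph homomorphism from `G` to `H`. -/
def IsSLSHom {V W : Type*} (G : SimpleGraph V) (H : SimpleGraph W) (f : V → W) : Prop :=
  (∀ a b : V, G.Adj a b → H.Adj (f a) (f b)) ∧
  Function.Surjective f ∧
  ∀ u : W, ∃ a : V, f a = u ∧ ∀ v : W, H.Adj u v → ∃ b : V, f b = v ∧ G.Adj a b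

/-- Vertices of the Kneser graph `KG n m`: `m`-element subsets of `{1, ..., n}`. -/
def KneserVert (n m : ℕ) : Type :=
  {A : Finset ℕ // A ⊆ Finset.Icc 1 n ∧ A.card = m}

/-- The Kneser graph `KG n m`. -/
def KG (n m : ℕ) : SimpleGraph (KneserVert n m) where
  Adj X Y := X ≠ Y ∧ Disjoint X.1 Y.1
  symm := by
    constructor
    intro X Y h
    exact ⟨h.1.symm, h.2.symm⟩
  loopless := by
    constructor
    intro X h
    exact h.1 rfl


lemma bset_subset_of_sls {V W : Type*} {G : SimpleGraph V} {H : SimpleGraph W} {φ : V → W}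
    (h : IsSLSHom G H φ) : BSet H ⊆ BSet G := by
  rintro k ⟨hk, c, hprop, hcol⟩
  refine ⟨hk, c ∘ φ, ?_, ?_⟩
  · intro u v huv
    exact hprop _ _ (h.1 u v huv)
  · intro j
    obtain ⟨v, hv, hdom⟩ := hcol j
    obtain ⟨a, ha, hlift⟩ := h.2.2 v
    refine ⟨a, by simp [ha, hv], ?_⟩
    intro t
    rcases hdom t with h1 | ⟨u, hu, hcu⟩
    · left; simp [ha, h1]
    · obtain ⟨b, hb, hab⟩ := hlift u hu
      exact Or.inr ⟨b, hab, by simp [hb, hcu]⟩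

lemma bset_le_card {V : Type*} [Fintype V] (G : SimpleGraph V) :
    ∀ k ∈ BSet G, k ≤ Fintype.card V := by
  rintro k ⟨hk, f, _, hcol⟩
  choose g hg _ using hcol
  have hinj : Function.Injective g := by
    intro x y hxy
    rw [← hg x, ← hg y, hxy]
  simpa using Fintype.card_le_of_injective g hinj

noncomputable instance (n m : ℕ) : Fintype (KneserVert n m) :=
  Fintype.ofInjective
    (fun X => (⟨X.1, Finset.mem_powerset.mpr X.2.1⟩ : {s // s ∈ (Finset.Icc 1 n).powerset}))
    (by intro X Y h
        simp only [Subtype.mk.injEq] at h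
        exact Subtype.ext h)



/-- The map on underlying sets from (m+1)-subsets of [n+2] to m-subsets of [n]. -/
noncomputable def phiSet (n m : ℕ) (A : Finset ℕ) : Finset ℕ :=
  if h1 : (A ∩ Finset.Icc 1 n).card = m + 1 then
    (A ∩ Finset.Icc 1 n).erase ((A ∩ Finset.Icc 1 n).min' (Finset.card_pos.mp (by omega)))
  else if (A ∩ Finset.Icc 1 n).card = m then A ∩ Finset.Icc 1 n
  else if h3 : (Finset.Icc 1 n \ (A ∩ Finset.Icc 1 n)).Nonempty then
    insert ((Finset.Icc 1 n \ (A ∩ Finset.Icc 1 n)).min' h3) (A ∩ Finset.Icc 1 n)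
  else ∅

lemma min'_congr {s t : Finset ℕ} (h : s = t) (hs : s.Nonempty) (ht : t.Nonempty) :
    s.min' hs = t.min' ht := by subst h; rfl

lemma phiSet_cases (n m : ℕ) (hm : 0 < m) (hmn : m < n) (A : Finset ℕ)
    (hA : A ⊆ Finset.Icc 1 (n + 2)) (hcard : A.card = m + 1) :
    (A ⊆ Finset.Icc 1 n ∧ ∃ x ∈ A, (∀ y ∈ A, x ≤ y) ∧ phiSet n m A = A.erase x) ∨
    ((A ∩ Finset.Icc 1 n).card = m ∧ (∃ y ∈ A, y = n + 1 ∨ y = n + 2) ∧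
      phiSet n m A = A ∩ Finset.Icc 1 n) ∨
    ((n + 1) ∈ A ∧ (n + 2) ∈ A ∧ (A ∩ Finset.Icc 1 n).card + 1 = m ∧
      ∃ x, x ∉ A ∧ x ∈ Finset.Icc 1 n ∧ (∀ s ∈ Finset.Icc 1 n, s ∉ A → x ≤ s) ∧
        phiSet n m A = insert x (A ∩ Finset.Icc 1 n)) := by
  set A' := A ∩ Finset.Icc 1 n with hA'
  have hsub : A' ⊆ A := Finset.inter_subset_left
  have hsubIcc : A' ⊆ Finset.Icc 1 n := Finset.inter_subset_right
  have hpair : A \ A' ⊆ {n + 1, n + 2} := by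
    intro x hx
    rw [Finset.mem_sdiff] at hx
    have h1 := hA hx.1
    rw [Finset.mem_Icc] at h1
    have h2 : x ∉ Finset.Icc 1 n := by
      intro hc
      exact hx.2 (Finset.mem_inter.mpr ⟨hx.1, hc⟩)
    rw [Finset.mem_Icc] at h2
    simp only [Finset.mem_insert, Finset.mem_singleton]
    omega
  have hpaircard : ({n + 1, n + 2} : Finset ℕ).card = 2 := by
    rw [Finset.card_insert_of_notMem (by simp), Finset.card_singleton]
  have hsdcard : (A \ A').card + A'.card = A.card :=
    Finset.card_sdiff_add_card_eq_card hsub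
  have hsd2 : (A \ A').card ≤ 2 := by
    have := Finset.card_le_card hpair
    omega
  have hcardA' : A'.card ≤ A.card := Finset.card_le_card hsub
  by_cases h1 : A'.card = m + 1
  · -- case 1 : A = A'
    have hAeq : A' = A := Finset.eq_of_subset_of_card_le hsub (by omega)
    have hAne : A.Nonempty := Finset.card_pos.mp (by omega)
    left
    refine ⟨hAeq ▸ hsubIcc, A.min' hAne, A.min'_mem hAne, fun y hy => A.min'_le y hy, ?_⟩
    rw [phiSet, dif_pos h1, min'_congr hAeq _ hAne, ← hA', hAeq]
  · by_cases h2 : A'.card = m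
    · -- case 2
      right; left
      refine ⟨h2, ?_, ?_⟩
      · have hne : (A \ A').Nonempty := Finset.card_pos.mp (by omega)
        obtain ⟨y, hy⟩ := hne
        have := hpair hy
        simp only [Finset.mem_insert, Finset.mem_singleton] at this
        exact ⟨y, (Finset.mem_sdiff.mp hy).1, this⟩
      · rw [phiSet, dif_neg h1, if_pos h2]
    · -- case 3
      right; right
      have h3 : A'.card + 1 = m := by omega
      have hpeq : A \ A' = {n + 1, n + 2} :=
        Finset.eq_of_subset_of_card_le hpair (by omega)
      have hn1 : n + 1 ∈ A := (Finset.mem_sdiff.mp (hpeq ▸ (by simp : (n+1) ∈ ({n+1, n+2} : Finset ℕ)))).1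
      have hn2 : n + 2 ∈ A := (Finset.mem_sdiff.mp (hpeq ▸ (by simp : (n+2) ∈ ({n+1, n+2} : Finset ℕ)))).1
      have hne : (Finset.Icc 1 n \ A').Nonempty := by
        rw [Finset.sdiff_nonempty]
        intro hsub2
        have := Finset.card_le_card hsub2
        rw [Nat.card_Icc] at this
        omega
      set x := (Finset.Icc 1 n \ A').min' hne with hx
      have hxmem : x ∈ Finset.Icc 1 n \ A' := Finset.min'_mem _ _
      rw [Finset.mem_sdiff] at hxmem
      have hxA : x ∉ A := by
        intro hc
        exact hxmem.2 (Finset.mem_inter.mpr ⟨hc, hxmem.1⟩)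
      refine ⟨hn1, hn2, h3, x, hxA, hxmem.1, ?_, ?_⟩
      · intro s hs hsA
        exact Finset.min'_le _ s (Finset.mem_sdiff.mpr ⟨hs, fun hc => hsA (hsub hc)⟩)
      · rw [phiSet, dif_neg h1, if_neg h2, dif_pos hne]

lemma phiSet_card (n m : ℕ) (hm : 0 < m) (hmn : m < n) (A : Finset ℕ)
    (hA : A ⊆ Finset.Icc 1 (n + 2)) (hcard : A.card = m + 1) :
    phiSet n m A ⊆ Finset.Icc 1 n ∧ (phiSet n m A).card = m := by
  rcases phiSet_cases n m hm hmn A hA hcard with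
    ⟨hsub, x, hx, _, heq⟩ | ⟨h2, _, heq⟩ | ⟨_, _, h3, x, hxA, hxIcc, _, heq⟩
  · rw [heq]
    exact ⟨(Finset.erase_subset _ _).trans hsub, by rw [Finset.card_erase_of_mem hx, hcard]; omega⟩
  · rw [heq]
    exact ⟨Finset.inter_subset_right, h2⟩
  · rw [heq]
    constructor
    · intro t ht
      rcases Finset.mem_insert.mp ht with rfl | ht'
      · exact hxIcc
      · exact Finset.inter_subset_right ht'
    · rw [Finset.card_insert_of_notMem (fun hc => hxA (Finset.inter_subset_left hc))]
      exact h3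

lemma phiSet_disjoint_aux (n m : ℕ) {A B : Finset ℕ} {xA xB : ℕ} (hd : Disjoint A B)
    (hsB : B ⊆ Finset.Icc 1 n)
    (hxAn : xA ∉ A) (hxAm : ∀ s ∈ Finset.Icc 1 n, s ∉ A → xA ≤ s)
    (hxB : xB ∈ B) (hmB : ∀ y ∈ B, xB ≤ y) :
    Disjoint (insert xA (A ∩ Finset.Icc 1 n)) (B.erase xB) := by
  rw [Finset.disjoint_left]
  intro t ht htB
  rw [Finset.mem_erase] at htB
  rcases Finset.mem_insert.mp ht with heq | ht'
  · have h1 : xA ≤ xB := hxAm xB (hsB hxB) (Finset.disjoint_right.mp hd hxB)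
    have h2 : xB ≤ t := hmB _ htB.2
    have h3 := htB.1
    omega
  · exact Finset.disjoint_left.mp hd (Finset.inter_subset_left ht') htB.2

lemma phiSet_disjoint (n m : ℕ) (hm : 0 < m) (hmn : m < n) {A B : Finset ℕ}
    (hA : A ⊆ Finset.Icc 1 (n + 2)) (hcA : A.card = m + 1)
    (hB : B ⊆ Finset.Icc 1 (n + 2)) (hcB : B.card = m + 1)
    (hd : Disjoint A B) : Disjoint (phiSet n m A) (phiSet n m B) := by
  have hdl := Finset.disjoint_left.mp hd
  rcases phiSet_cases n m hm hmn A hA hcA with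
      ⟨hsA, xA, hxA, hmA, heA⟩ | ⟨_, ⟨yA, hyA, hyA2⟩, heA⟩ |
      ⟨h1A, h2A, _, xA, hxAn, hxAI, hxAm, heA⟩ <;>
    rcases phiSet_cases n m hm hmn B hB hcB with
      ⟨hsB, xB, hxB, hmB, heB⟩ | ⟨_, ⟨yB, hyB, hyB2⟩, heB⟩ |
      ⟨h1B, h2B, _, xB, hxBn, hxBI, hxBm, heB⟩ <;>
    rw [heA, heB]
  · exact Finset.disjoint_of_subset_left (Finset.erase_subset _ _)
      (Finset.disjoint_of_subset_right (Finset.erase_subset _ _) hd)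
  · exact Finset.disjoint_of_subset_left (Finset.erase_subset _ _)
      (Finset.disjoint_of_subset_right Finset.inter_subset_left hd)
  · exact (phiSet_disjoint_aux n m hd.symm hsA hxBn hxBm hxA hmA).symm
  · exact Finset.disjoint_of_subset_left Finset.inter_subset_left
      (Finset.disjoint_of_subset_right (Finset.erase_subset _ _) hd)
  · exact Finset.disjoint_of_subset_left Finset.inter_subset_left
      (Finset.disjoint_of_subset_right Finset.inter_subset_left hd)
  · rcases hyA2 with rfl | rfl
    · exact absurd h1B (fun h => hdl hyA h)
    · exact absurd h2B (fun h => hdl hyA h)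
  · exact phiSet_disjoint_aux n m hd hsB hxAn hxAm hxB hmB
  · rcases hyB2 with rfl | rfl
    · exact absurd hyB (fun h => hdl h1A h)
    · exact absurd hyB (fun h => hdl h2A h)
  · exact absurd h1B (fun h => hdl h1A h)

/-- The vertex map `KG (n+2) (m+1) → KG n m`. -/
noncomputable def phi (n m : ℕ) (hm : 0 < m) (hmn : m < n)
    (X : KneserVert (n + 2) (m + 1)) : KneserVert n m :=
  ⟨phiSet n m X.1, (phiSet_card n m hm hmn X.1 X.2.1 X.2.2).1,
    (phiSet_card n m hm hmn X.1 X.2.1 X.2.2).2⟩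

lemma phiSet_insert (n m : ℕ) {D : Finset ℕ} (hD : D ⊆ Finset.Icc 1 n)
    (hDc : D.card = m) {t : ℕ} (ht : t ∉ Finset.Icc 1 n) :
    phiSet n m (insert t D) = D := by
  have hint : insert t D ∩ Finset.Icc 1 n = D := by
    ext x
    simp only [Finset.mem_inter, Finset.mem_insert]
    constructor
    · rintro ⟨rfl | hx, hI⟩
      · exact absurd hI ht
      · exact hx
    · intro hx
      exact ⟨Or.inr hx, hD hx⟩
  rw [phiSet]
  rw [dif_neg (by rw [hint, hDc]; omega), if_pos (by rw [hint, hDc])]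
  exact hint

/-- `insert t D` is a vertex of `KG (n+2) (m+1)` for `t ∈ {n+1, n+2}`. -/
lemma insert_vert (n m : ℕ) {D : Finset ℕ} (hD : D ⊆ Finset.Icc 1 n) (hDc : D.card = m)
    {t : ℕ} (ht1 : n < t) (ht2 : t ≤ n + 2) :
    insert t D ⊆ Finset.Icc 1 (n + 2) ∧ (insert t D).card = m + 1 := by
  have htn : t ∉ Finset.Icc 1 n := by rw [Finset.mem_Icc]; omega
  constructor
  · intro x hx
    rcases Finset.mem_insert.mp hx with rfl | hx'
    · rw [Finset.mem_Icc]; omega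
    · have := hD hx'
      rw [Finset.mem_Icc] at this ⊢
      omega
  · rw [Finset.card_insert_of_notMem (fun hc => htn (hD hc)), hDc]

lemma phi_sls (n m : ℕ) (hm : 0 < m) (hmn : m < n) :
    IsSLSHom (KG (n + 2) (m + 1)) (KG n m) (phi n m hm hmn) := by
  have hvert : ∀ (C : KneserVert n m) (t : ℕ), n < t → t ≤ n + 2 →
      (insert t C.1 ⊆ Finset.Icc 1 (n + 2) ∧ (insert t C.1).card = m + 1) :=
    fun C t h1 h2 => insert_vert n m C.2.1 C.2.2 h1 h2
  have hphi_ins : ∀ (C : KneserVert n m) (t : ℕ) (h1 : n < t) (h2 : t ≤ n + 2),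
      phi n m hm hmn ⟨insert t C.1, hvert C t h1 h2⟩ = C := by
    intro C t h1 h2
    apply Subtype.ext
    exact phiSet_insert n m C.2.1 C.2.2 (by rw [Finset.mem_Icc]; omega)
  refine ⟨?_, ?_, ?_⟩
  · -- homomorphism
    rintro X Y ⟨hne, hd⟩
    have hdis := phiSet_disjoint n m hm hmn X.2.1 X.2.2 Y.2.1 Y.2.2 hd
    refine ⟨?_, hdis⟩
    intro hc
    have hval : phiSet n m X.1 = phiSet n m Y.1 := congrArg Subtype.val hc
    have hdis2 : Disjoint (phiSet n m X.1) (phiSet n m X.1) := by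
      conv_rhs => rw [hval]
      exact hdis
    have hemp : phiSet n m X.1 = ⊥ := disjoint_self.mp hdis2
    have hcard := (phiSet_card n m hm hmn X.1 X.2.1 X.2.2).2
    rw [hemp] at hcard
    simp [Finset.bot_eq_empty] at hcard
    omega
  · -- surjective
    intro C
    exact ⟨⟨insert (n + 1) C.1, hvert C (n + 1) (by omega) (by omega)⟩,
      hphi_ins C (n + 1) (by omega) (by omega)⟩
  · -- semi-local surjectivity
    intro C
    refine ⟨⟨insert (n + 1) C.1, hvert C (n + 1) (by omega) (by omega)⟩,
      hphi_ins C (n + 1) (by omega) (by omega), ?_⟩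
    rintro D ⟨hne, hd⟩
    refine ⟨⟨insert (n + 2) D.1, hvert D (n + 2) (by omega) (by omega)⟩,
      hphi_ins D (n + 2) (by omega) (by omega), ?_, ?_⟩
    · intro hc
      have : insert (n + 1) C.1 = insert (n + 2) D.1 := congrArg Subtype.val hc
      have h1 : (n + 1 : ℕ) ∈ insert (n + 2) D.1 := this ▸ Finset.mem_insert_self _ _
      rcases Finset.mem_insert.mp h1 with h | h
      · omega
      · have := D.2.1 h
        rw [Finset.mem_Icc] at this
        omega
    · rw [Finset.disjoint_left]
      intro x hx hx'
      rcases Finset.mem_insert.mp hx with rfl | hx1 <;>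
        rcases Finset.mem_insert.mp hx' with h | h
      · omega
      · have := D.2.1 h; rw [Finset.mem_Icc] at this; omega
      · have := C.2.1 hx1; rw [Finset.mem_Icc] at this; omega
      · exact Finset.disjoint_left.mp hd hx1 h

/-- For nonnegative integers `a > 2b` and every integer `i ≥ 2`,
`b(KG(2i+a, i+b)) ≤ b(KG(2(i+1)+a, (i+1)+b))`. -/
theorem stmt_9 (a b : ℕ) (hab : a > 2 * b) (i : ℕ) (hi : 2 ≤ i) :
    bChromaticNumber (KG (2 * i + a) (i + b)) ≤
      bChromaticNumber (KG (2 * (i + 1) + a) ((i + 1) + b)) := by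
  have e1 : 2 * (i + 1) + a = (2 * i + a) + 2 := by ring
  have e2 : (i + 1) + b = (i + b) + 1 := by ring
  rw [e1, e2]
  have hm : 0 < i + b := by omega
  have hmn : i + b < 2 * i + a := by omega
  have hsls := phi_sls (2 * i + a) (i + b) hm hmn
  unfold bChromaticNumber
  rcases Set.eq_empty_or_nonempty (BSet (KG (2 * i + a) (i + b))) with he | hne
  · rw [he, csSup_empty]
    exact bot_le
  · exact csSup_le_csSup
      ⟨Fintype.card (KneserVert (2 * i + a + 2) (i + b + 1)),
        fun k hk => bset_le_card _ k hk⟩ hne (bset_subset_of_sls hsls)
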